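/- Let q > 1, c > 0, ε > 0 and u_0 > 0. Let F : [0,∞) × ℝ³ → ℝ be continuous, nonnegative and spherically symmetric, and let φ be a spherically symmetric C² solution of □φ = F on [0,∞) × ℝ³ with φ(0,·) = ∂_tφ(0,·) = 0. (i) If F(t,x) ≥ c · v^{−q} whenever u ∈ [u_0, u_0 + ε] (where u = (t−|x|)/2, v = (t+|x|)/2), then there exist u_1 and C > 0, depending only on ε, q, c, u_0, such that φ(t,x) ≥ C · t^{−1} · u^{1−q} at every point of [0,∞) × ℝ³ with u > u_1. (ii) If instead, for some s ∈ ℝ with s ≠ 1, F(t,x) ≥ c · v^{−q} · u^{−s} whenever u > u_0, then there exist u_1 and C > 0, depending only on q, c, s, u_0, such that φ(t,x) ≥ C · t^{−1} · u^{1−q+max(1−s,0)} at every point with u > u_1. -/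

import Mathlib

open Real Set MeasureTheory

noncomputable section

/-- Three-dimensional Euclidean space. -/
abbrev E3 : Type := EuclideanSpace ℝ (Fin 3)

/-- Partial derivative in time of a function of `(t, x)`. -/
def dtP (φ : ℝ → E3 → ℝ) : ℝ → E3 → ℝ := fun t x => deriv (fun s => φ s x) t

/-- Partial derivative in the `i`-th spatial coordinate. -/
def pX (i : Fin 3) (f : E3 → ℝ) : E3 → ℝ :=
  fun x => deriv (fun h : ℝ => f (x + h • (EuclideanSpace.single i (1 : ℝ)))) 0

/-- Spatial Laplacian on `ℝ³`. -/
def lap3 (f : E3 → ℝ) : E3 → ℝ := fun x => ∑ i : Fin 3, pX i (pX i f) x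

/-- The wave operator `□φ = ∂_t²φ - Δφ` on `ℝ^{1+3}`. -/
def box (φ : ℝ → E3 → ℝ) : ℝ → E3 → ℝ := fun t x => dtP (dtP φ) t x - lap3 (φ t) x

/-- A function on `ℝ³` is radial (spherically symmetric) if it depends only on `|x|`. -/
def Radial (f : E3 → ℝ) : Prop := ∀ x y : E3, ‖x‖ = ‖y‖ → f x = f y


open Filter Topology

lemma lineDeriv1 {g : ℝ × ℝ → ℝ} (hg : Differentiable ℝ g) (p w : ℝ × ℝ) (s : ℝ) :
    HasDerivAt (fun τ : ℝ => g (p + τ • w)) (fderiv ℝ g (p + s • w) w) s := by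
  have hc : HasDerivAt (fun τ : ℝ => p + τ • w) w s := by
    simpa using ((hasDerivAt_id s).smul_const w).const_add p
  exact ((hg (p + s • w)).hasFDerivAt.comp_hasDerivAt s hc)

lemma lineDeriv2 {g : ℝ × ℝ → ℝ} (hg : ContDiff ℝ 2 g) (p w w₀ : ℝ × ℝ) (s : ℝ) :
    HasDerivAt (fun τ : ℝ => fderiv ℝ g (p + τ • w) w₀)
      (fderiv ℝ (fderiv ℝ g) (p + s • w) w w₀) s := by
  have hc : HasDerivAt (fun τ : ℝ => p + τ • w) w s := by
    simpa using ((hasDerivAt_id s).smul_const w).const_add p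
  have hd : Differentiable ℝ (fderiv ℝ g) :=
    (hg.fderiv_right (m := 1) le_rfl).differentiable one_ne_zero
  have := (((ContinuousLinearMap.apply ℝ ℝ w₀).hasFDerivAt.comp _
      (hd (p + s • w)).hasFDerivAt).comp_hasDerivAt s hc)
  exact this

lemma norm_line_sq (x : E3) (i : Fin 3) (s : ℝ) :
    ‖x + s • EuclideanSpace.single i (1:ℝ)‖ ^ 2 = ‖x‖ ^ 2 + 2 * s * x i + s ^ 2 := by
  have h := norm_add_sq_real x (s • EuclideanSpace.single i (1:ℝ))
  rw [h, real_inner_smul_right, EuclideanSpace.inner_single_right, norm_smul,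
    EuclideanSpace.norm_single]
  simp [mul_comm]
  ring

lemma hasDerivAt_norm_line (x : E3) (i : Fin 3) (s : ℝ)
    (h : x + s • EuclideanSpace.single i (1:ℝ) ≠ 0) :
    HasDerivAt (fun τ : ℝ => ‖x + τ • EuclideanSpace.single i (1:ℝ)‖)
      ((x i + s) / ‖x + s • EuclideanSpace.single i (1:ℝ)‖) s := by
  set n : ℝ → ℝ := fun τ => ‖x + τ • EuclideanSpace.single i (1:ℝ)‖ with hn
  have hQ : ∀ τ, n τ = Real.sqrt (‖x‖ ^ 2 + 2 * τ * x i + τ ^ 2) := by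
    intro τ
    rw [← norm_line_sq x i τ, Real.sqrt_sq (norm_nonneg _)]
  have hns : 0 < n s := by
    simpa [hn] using norm_pos_iff.2 h
  have hQs : ‖x‖ ^ 2 + 2 * s * x i + s ^ 2 ≠ 0 := by
    have := norm_line_sq x i s
    nlinarith [hns]
  have hpoly : HasDerivAt (fun τ : ℝ => ‖x‖ ^ 2 + 2 * τ * x i + τ ^ 2)
      (2 * x i + 2 * s) s := by
    have h1 : HasDerivAt (fun τ : ℝ => 2 * τ * x i) (2 * x i) s := by
      simpa [mul_comm, mul_assoc] using
        ((hasDerivAt_id s).const_mul 2).mul_const (x i)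
    have h2 : HasDerivAt (fun τ : ℝ => τ ^ 2) (2 * s) s := by
      simpa using hasDerivAt_pow 2 s
    have := (h1.add h2).const_add (‖x‖ ^ 2)
    simpa [add_assoc] using this
  have := (Real.hasDerivAt_sqrt hQs).comp s hpoly
  have hfun : n = (fun z => Real.sqrt z) ∘ (fun τ : ℝ => ‖x‖ ^ 2 + 2 * τ * x i + τ ^ 2) := by
    funext τ; exact hQ τ
  rw [hfun]
  refine this.congr_deriv ?_
  have hNQ : Real.sqrt (‖x‖ ^ 2 + 2 * s * x i + s ^ 2)
      = ‖x + s • EuclideanSpace.single i (1:ℝ)‖ := by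
    rw [← norm_line_sq x i s, Real.sqrt_sq (norm_nonneg _)]
  rw [hNQ]
  have : (0:ℝ) < ‖x + s • EuclideanSpace.single i (1:ℝ)‖ := hns
  field_simp

lemma pX_radial {f : E3 → ℝ} {gr gr' : ℝ → ℝ} (hgr : ∀ y : E3, f y = gr ‖y‖)
    (h1 : ∀ ρ, HasDerivAt gr (gr' ρ) ρ) (i : Fin 3) (y : E3) (hy : y ≠ 0) :
    pX i f y = gr' ‖y‖ * (y i / ‖y‖) := by
  have hn := hasDerivAt_norm_line y i 0 (by simpa using hy)
  have : HasDerivAt (fun τ : ℝ => f (y + τ • EuclideanSpace.single i (1:ℝ)))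
      (gr' ‖y‖ * ((y i + 0) / ‖y + (0:ℝ) • EuclideanSpace.single i (1:ℝ)‖)) 0 := by
    have hcomp := (h1 ‖y + (0:ℝ) • EuclideanSpace.single i (1:ℝ)‖).comp 0 hn
    have heq : (fun τ : ℝ => f (y + τ • EuclideanSpace.single i (1:ℝ)))
        = gr ∘ (fun τ : ℝ => ‖y + τ • EuclideanSpace.single i (1:ℝ)‖) := by
      funext τ; exact hgr _
    rw [heq]
    simpa using hcomp
  simpa [pX] using this.deriv

lemma coord_line (x : E3) (i : Fin 3) (s : ℝ) :
    (x + s • EuclideanSpace.single i (1:ℝ)) i = x i + s := by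
  simp [PiLp.add_apply, PiLp.smul_apply, EuclideanSpace.single_apply]

lemma pX2_radial {f : E3 → ℝ} {gr gr' gr'' : ℝ → ℝ} (hgr : ∀ y : E3, f y = gr ‖y‖)
    (h1 : ∀ ρ, HasDerivAt gr (gr' ρ) ρ) (h2 : ∀ ρ, HasDerivAt gr' (gr'' ρ) ρ)
    (i : Fin 3) (x : E3) (hx : x ≠ 0) :
    pX i (pX i f) x = gr'' ‖x‖ * (x i / ‖x‖) ^ 2
      + gr' ‖x‖ * ((‖x‖ - (x i) ^ 2 / ‖x‖) / ‖x‖ ^ 2) := by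
  set e : E3 := EuclideanSpace.single i (1:ℝ) with he
  set n : ℝ → ℝ := fun τ => ‖x + τ • e‖ with hn
  have hr : 0 < ‖x‖ := norm_pos_iff.2 hx
  have hc : Continuous (fun s : ℝ => x + s • e) := by continuity
  have hev : ∀ᶠ s in 𝓝 (0:ℝ), x + s • e ≠ 0 := by
    have h0 : (fun s : ℝ => x + s • e) 0 ≠ 0 := by simpa using hx
    exact hc.continuousAt.eventually_ne h0
  have hfe : (fun s => pX i f (x + s • e)) =ᶠ[𝓝 (0:ℝ)]
      (fun s => gr' (n s) * ((x i + s) / n s)) := by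
    filter_upwards [hev] with s hs
    rw [pX_radial hgr h1 i _ hs, coord_line]
  have hn0 : n 0 = ‖x‖ := by simp [hn]
  have hnderiv : HasDerivAt n ((x i + 0) / n 0) 0 := by
    simpa [hn] using hasDerivAt_norm_line x i 0 (by simpa using hx)
  have hA : HasDerivAt (fun s => gr' (n s)) (gr'' (n 0) * ((x i + 0) / n 0)) 0 := by
    have := (h2 (n 0)).comp 0 hnderiv
    exact this
  have hB : HasDerivAt (fun s => (x i + s) / n s)
      ((1 * n 0 - (x i + 0) * ((x i + 0) / n 0)) / n 0 ^ 2) 0 := by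
    have hnum : HasDerivAt (fun s : ℝ => x i + s) 1 0 := by
      simpa using (hasDerivAt_id (0:ℝ)).const_add (x i)
    exact hnum.div hnderiv (by rw [hn0]; exact ne_of_gt hr)
  have hAB := hA.mul hB
  have : pX i (pX i f) x = deriv (fun s => gr' (n s) * ((x i + s) / n s)) 0 := by
    unfold pX
    exact Filter.EventuallyEq.deriv_eq hfe
  rw [this, (show HasDerivAt (fun s => gr' (n s) * ((x i + s) / n s)) _ 0 from hAB).deriv, hn0]
  field_simp
  ring

lemma sum_sq_coords (x : E3) : x 0 ^ 2 + x 1 ^ 2 + x 2 ^ 2 = ‖x‖ ^ 2 := by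
  have h := EuclideanSpace.norm_eq x
  rw [h, Real.sq_sqrt (by positivity)]
  simp [Fin.sum_univ_three, sq_abs]

lemma lap3_radial {f : E3 → ℝ} {gr gr' gr'' : ℝ → ℝ} (hgr : ∀ y : E3, f y = gr ‖y‖)
    (h1 : ∀ ρ, HasDerivAt gr (gr' ρ) ρ) (h2 : ∀ ρ, HasDerivAt gr' (gr'' ρ) ρ)
    (x : E3) (hx : x ≠ 0) :
    lap3 f x = gr'' ‖x‖ + 2 / ‖x‖ * gr' ‖x‖ := by
  have hr : 0 < ‖x‖ := norm_pos_iff.2 hx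
  have hform : ∀ i : Fin 3, pX i (pX i f) x = gr'' ‖x‖ * (x i / ‖x‖) ^ 2
      + gr' ‖x‖ * ((‖x‖ - (x i) ^ 2 / ‖x‖) / ‖x‖ ^ 2) := fun i =>
    pX2_radial hgr h1 h2 i x hx
  unfold lap3
  rw [Fin.sum_univ_three, hform 0, hform 1, hform 2]
  have hs := sum_sq_coords x
  have hrne : ‖x‖ ≠ 0 := ne_of_gt hr
  have hx2 : x 2 ^ 2 = ‖x‖ ^ 2 - x 0 ^ 2 - x 1 ^ 2 := by linarith
  rw [hx2]
  field_simp
  linear_combination (gr'' ‖x‖ * ‖x‖) * hs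

def e₀ : E3 := EuclideanSpace.single 0 (1:ℝ)

lemma norm_e₀ : ‖e₀‖ = 1 := by simp [e₀]

lemma norm_smul_e₀ (r : ℝ) (hr : 0 ≤ r) : ‖r • e₀‖ = r := by
  rw [norm_smul, norm_e₀, mul_one, Real.norm_eq_abs, abs_of_nonneg hr]

section Wave

variable {φ F : ℝ → E3 → ℝ}

/-- the radial profile -/
def gP (φ : ℝ → E3 → ℝ) : ℝ × ℝ → ℝ := fun p => φ p.1 (p.2 • e₀)

lemma gP_contDiff (hφ : ContDiff ℝ 2 (fun p : ℝ × E3 => φ p.1 p.2)) :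
    ContDiff ℝ 2 (gP φ) := by
  have L : ContDiff ℝ 2 (fun p : ℝ × ℝ => ((p.1, p.2 • e₀) : ℝ × E3)) := by
    apply ContDiff.prodMk contDiff_fst
    exact contDiff_snd.smul contDiff_const
  exact hφ.comp L

lemma radial_eq_gP (hrad : ∀ t, Radial (φ t)) (t : ℝ) (y : E3) :
    φ t y = gP φ (t, ‖y‖) := by
  exact hrad t y (‖y‖ • e₀) (by rw [norm_smul_e₀ _ (norm_nonneg y)])

lemma symm2 {g : ℝ × ℝ → ℝ} (hg : ContDiff ℝ 2 g) (p w₁ w₂ : ℝ × ℝ) :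
    fderiv ℝ (fderiv ℝ g) p w₁ w₂ = fderiv ℝ (fderiv ℝ g) p w₂ w₁ := by
  have hd : Differentiable ℝ (fderiv ℝ g) :=
    (hg.fderiv_right (m := 1) le_rfl).differentiable one_ne_zero
  exact second_derivative_symmetric
    (fun y => ((hg.differentiable two_ne_zero) y).hasFDerivAt) (hd p).hasFDerivAt w₁ w₂

lemma dtP_eq (hφ : ContDiff ℝ 2 (fun p : ℝ × E3 => φ p.1 p.2))
    (hrad : ∀ t, Radial (φ t)) (t : ℝ) (x : E3) :
    dtP φ t x = fderiv ℝ (gP φ) (t, ‖x‖) (1, 0) := by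
  have hg := gP_contDiff hφ
  have hline := lineDeriv1 (hg.differentiable two_ne_zero) (0, ‖x‖) (1, 0) t
  have heq : (fun s : ℝ => φ s x) = fun s : ℝ => gP φ ((0, ‖x‖) + s • ((1:ℝ), (0:ℝ))) := by
    funext s
    rw [radial_eq_gP hrad]
    norm_num [Prod.ext_iff]
  unfold dtP
  rw [heq]
  have : ((0:ℝ), ‖x‖) + t • ((1:ℝ), (0:ℝ)) = (t, ‖x‖) := by norm_num [Prod.ext_iff]
  rw [← this]
  exact hline.deriv

lemma dtP2_eq (hφ : ContDiff ℝ 2 (fun p : ℝ × E3 => φ p.1 p.2))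
    (hrad : ∀ t, Radial (φ t)) (t : ℝ) (x : E3) :
    dtP (dtP φ) t x = fderiv ℝ (fderiv ℝ (gP φ)) (t, ‖x‖) (1, 0) (1, 0) := by
  have hg := gP_contDiff hφ
  have hline := lineDeriv2 hg (0, ‖x‖) (1, 0) (1, 0) t
  have heq : (fun s : ℝ => dtP φ s x)
      = fun s : ℝ => fderiv ℝ (gP φ) ((0, ‖x‖) + s • ((1:ℝ), (0:ℝ))) (1, 0) := by
    funext s
    rw [dtP_eq hφ hrad]
    norm_num [Prod.ext_iff]
  have hshow : dtP (dtP φ) t x = deriv (fun s : ℝ => dtP φ s x) t := rfl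
  rw [hshow, heq]
  have : ((0:ℝ), ‖x‖) + t • ((1:ℝ), (0:ℝ)) = (t, ‖x‖) := by norm_num [Prod.ext_iff]
  rw [← this]
  exact hline.deriv

lemma lap3_eq (hφ : ContDiff ℝ 2 (fun p : ℝ × E3 => φ p.1 p.2))
    (hrad : ∀ t, Radial (φ t)) (t : ℝ) (x : E3) (hx : x ≠ 0) :
    lap3 (φ t) x = fderiv ℝ (fderiv ℝ (gP φ)) (t, ‖x‖) (0, 1) (0, 1)
      + 2 / ‖x‖ * fderiv ℝ (gP φ) (t, ‖x‖) (0, 1) := by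
  have hg := gP_contDiff hφ
  have hgr : ∀ y : E3, φ t y = (fun ρ => gP φ (t, ρ)) ‖y‖ := fun y => radial_eq_gP hrad t y
  have h1 : ∀ ρ : ℝ, HasDerivAt (fun ρ => gP φ (t, ρ)) (fderiv ℝ (gP φ) (t, ρ) (0, 1)) ρ := by
    intro ρ
    have := lineDeriv1 (hg.differentiable two_ne_zero) (t, 0) (0, 1) ρ
    have hpt : ((t:ℝ), (0:ℝ)) + ρ • ((0:ℝ), (1:ℝ)) = (t, ρ) := by norm_num [Prod.ext_iff]
    rw [hpt] at this
    convert this using 2 with τ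
    norm_num [Prod.ext_iff]
  have h2 : ∀ ρ : ℝ, HasDerivAt (fun ρ => fderiv ℝ (gP φ) (t, ρ) (0, 1))
      (fderiv ℝ (fderiv ℝ (gP φ)) (t, ρ) (0, 1) (0, 1)) ρ := by
    intro ρ
    have := lineDeriv2 hg (t, 0) (0, 1) (0, 1) ρ
    have hpt : ((t:ℝ), (0:ℝ)) + ρ • ((0:ℝ), (1:ℝ)) = (t, ρ) := by norm_num [Prod.ext_iff]
    rw [hpt] at this
    convert this using 2 with τ
    norm_num [Prod.ext_iff]
  exact lap3_radial hgr h1 h2 x hx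

lemma wave_identity (hφ : ContDiff ℝ 2 (fun p : ℝ × E3 => φ p.1 p.2))
    (hrad : ∀ t, Radial (φ t))
    (hbox : ∀ (t : ℝ) (x : E3), 0 ≤ t → box φ t x = F t x)
    (t r : ℝ) (ht : 0 ≤ t) (hr : 0 < r) :
    fderiv ℝ (fderiv ℝ (gP φ)) (t, r) (1, 0) (1, 0)
      - fderiv ℝ (fderiv ℝ (gP φ)) (t, r) (0, 1) (0, 1)
      - 2 / r * fderiv ℝ (gP φ) (t, r) (0, 1) = F t (r • e₀) := by
  have hxne : (r • e₀ : E3) ≠ 0 := by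
    intro h
    have := norm_smul_e₀ r hr.le
    rw [h, norm_zero] at this
    exact hr.ne this
  have hb := hbox t (r • e₀) ht
  unfold box at hb
  rw [dtP2_eq hφ hrad, lap3_eq hφ hrad t _ hxne, norm_smul_e₀ r hr.le] at hb
  linarith [hb]

lemma mHasDeriv {g : ℝ × ℝ → ℝ} (hg : ContDiff ℝ 2 g) (v' u' : ℝ) :
    HasDerivAt (fun w => (v' - w) * fderiv ℝ g (w + v', v' - w) (1, 1) + g (w + v', v' - w))
      ((v' - u') * (fderiv ℝ (fderiv ℝ g) (u' + v', v' - u') (1, 0) (1, 0)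
          - fderiv ℝ (fderiv ℝ g) (u' + v', v' - u') (0, 1) (0, 1))
        - 2 * fderiv ℝ g (u' + v', v' - u') (0, 1)) u' := by
  have hpt : ∀ w : ℝ, ((v', v') : ℝ × ℝ) + w • ((1:ℝ), (-1:ℝ)) = (w + v', v' - w) := by
    intro w
    simp only [Prod.ext_iff, Prod.fst_add, Prod.snd_add, Prod.smul_mk, smul_eq_mul,
      Prod.mk_add_mk]
    norm_num
    try constructor
    all_goals ring
  have hA : HasDerivAt (fun w => fderiv ℝ g (w + v', v' - w) ((1:ℝ), (1:ℝ)))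
      (fderiv ℝ (fderiv ℝ g) (u' + v', v' - u') (1, -1) (1, 1)) u' := by
    have := lineDeriv2 hg (v', v') (1, -1) (1, 1) u'
    rw [hpt u'] at this
    convert this using 2 with w
    rw [hpt w]
  have hC : HasDerivAt (fun w => g (w + v', v' - w))
      (fderiv ℝ g (u' + v', v' - u') (1, -1)) u' := by
    have := lineDeriv1 (hg.differentiable two_ne_zero) (v', v') (1, -1) u'
    rw [hpt u'] at this
    convert this using 2 with w
    rw [hpt w]
  have hB : HasDerivAt (fun w : ℝ => v' - w) (-1) u' := by
    simpa using ((hasDerivAt_id u').const_sub v')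
  have hsum := (hB.mul hA).add hC
  refine hsum.congr_deriv ?_
  have e1 : ((1:ℝ), (-1:ℝ)) = ((1:ℝ), (0:ℝ)) - ((0:ℝ), (1:ℝ)) := by norm_num
  have e2 : ((1:ℝ), (1:ℝ)) = ((1:ℝ), (0:ℝ)) + ((0:ℝ), (1:ℝ)) := by norm_num
  rw [e1, e2, map_sub, map_add]
  simp only [ContinuousLinearMap.sub_apply, ContinuousLinearMap.add_apply, map_add, map_sub]
  rw [symm2 hg _ (0,1) (1,0)]
  ring

lemma kHasDeriv {g : ℝ × ℝ → ℝ} (hg : ContDiff ℝ 2 g) (u v' : ℝ) :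
    HasDerivAt (fun w => (w - u) * g (u + w, w - u))
      ((v' - u) * fderiv ℝ g (u + v', v' - u) (1, 1) + g (u + v', v' - u)) v' := by
  have hpt : ∀ w : ℝ, ((u, -u) : ℝ × ℝ) + w • ((1:ℝ), (1:ℝ)) = (u + w, w - u) := by
    intro w
    simp only [Prod.ext_iff, Prod.fst_add, Prod.snd_add, Prod.smul_mk, smul_eq_mul,
      Prod.mk_add_mk]
    norm_num
    try constructor
    all_goals ring
  have hA : HasDerivAt (fun w => g (u + w, w - u))
      (fderiv ℝ g (u + v', v' - u) (1, 1)) v' := by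
    have := lineDeriv1 (hg.differentiable two_ne_zero) (u, -u) (1, 1) v'
    rw [hpt v'] at this
    convert this using 2 with w
    rw [hpt w]
  have hB : HasDerivAt (fun w : ℝ => w - u) 1 v' := by
    simpa using (hasDerivAt_id v').sub_const u
  have := (hB.mul hA).add ((hB.mul hA))
  have hsum := hB.mul hA
  -- product rule for (w-u) * g(...)
  have hprod := HasDerivAt.mul hB hA
  refine hprod.congr_deriv ?_
  ring

lemma rpow_contOn {α β : ℝ} (e : ℝ) (hα : 0 < α) :
    ContinuousOn (fun z : ℝ => z ^ e) (Icc α β) := by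
  apply ContinuousOn.rpow_const continuousOn_id
  intro z hz
  exact Or.inl (ne_of_gt (lt_of_lt_of_le hα hz.1))

lemma integral_lb {w : ℝ → ℝ} {α a b β M : ℝ} (hαa : α ≤ a) (hab : a ≤ b) (hbβ : b ≤ β)
    (hcont : ContinuousOn w (Icc α β)) (hnn : ∀ z ∈ Icc α β, 0 ≤ w z)
    (hM : ∀ z ∈ Icc a b, M ≤ w z) (hM0 : 0 ≤ M) :
    (b - a) * M ≤ ∫ z in α..β, w z := by
  have hsub1 : Icc α a ⊆ Icc α β := Icc_subset_Icc le_rfl (hab.trans hbβ)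
  have hsub2 : Icc a b ⊆ Icc α β := Icc_subset_Icc hαa hbβ
  have hsub3 : Icc b β ⊆ Icc α β := Icc_subset_Icc (hαa.trans hab) le_rfl
  have hi1 : IntervalIntegrable w volume α a :=
    (hcont.mono hsub1).intervalIntegrable_of_Icc hαa
  have hi2 : IntervalIntegrable w volume a b :=
    (hcont.mono hsub2).intervalIntegrable_of_Icc hab
  have hi3 : IntervalIntegrable w volume b β :=
    (hcont.mono hsub3).intervalIntegrable_of_Icc hbβ
  have hsplit : ∫ z in α..β, w z
      = (∫ z in α..a, w z) + ((∫ z in a..b, w z) + ∫ z in b..β, w z) := by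
    rw [intervalIntegral.integral_add_adjacent_intervals hi2 hi3,
      intervalIntegral.integral_add_adjacent_intervals hi1 (hi2.trans hi3)]
  rw [hsplit]
  have h1 : 0 ≤ ∫ z in α..a, w z :=
    intervalIntegral.integral_nonneg hαa (fun z hz => hnn z (hsub1 hz))
  have h3 : 0 ≤ ∫ z in b..β, w z :=
    intervalIntegral.integral_nonneg hbβ (fun z hz => hnn z (hsub3 hz))
  have h2 : (b - a) * M ≤ ∫ z in a..b, w z := by
    have hc : IntervalIntegrable (fun _ : ℝ => M) volume a b := intervalIntegrable_const
    have := intervalIntegral.integral_mono_on hab hc hi2 hM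
    simpa [smul_eq_mul] using this
  linarith

lemma calc1 {q u v : ℝ} (hq : 1 < q) (hu : 1 ≤ u) (huv : u ≤ v) :
    2 ^ (1 - q) * ((v - u) * (u + v)⁻¹ * u ^ (1 - q)) ≤ ∫ z in u..v, z ^ (1 - q) := by
  have hu0 : (0:ℝ) < u := lt_of_lt_of_le one_pos hu
  set w := min v (2 * u) with hw
  have huw : u ≤ w := le_min huv (by linarith)
  have hwv : w ≤ v := min_le_left _ _
  have hw2u : w ≤ 2 * u := min_le_right _ _
  have hcont := rpow_contOn (α := u) (β := v) (1 - q) hu0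
  have hi1 : IntervalIntegrable (fun z : ℝ => z ^ (1 - q)) volume u w :=
    ((hcont.mono (Icc_subset_Icc le_rfl hwv)).intervalIntegrable_of_Icc huw)
  have hi2 : IntervalIntegrable (fun z : ℝ => z ^ (1 - q)) volume w v :=
    ((hcont.mono (Icc_subset_Icc huw le_rfl)).intervalIntegrable_of_Icc hwv)
  have hsplit : ∫ z in u..v, z ^ (1 - q)
      = (∫ z in u..w, z ^ (1 - q)) + ∫ z in w..v, z ^ (1 - q) :=
    (intervalIntegral.integral_add_adjacent_intervals hi1 hi2).symm
  have h3 : 0 ≤ ∫ z in w..v, z ^ (1 - q) :=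
    intervalIntegral.integral_nonneg hwv
      (fun z hz => rpow_nonneg (le_trans (by linarith [hu0, huw]) hz.1) _)
  have h2 : (w - u) * ((2 * u) ^ (1 - q)) ≤ ∫ z in u..w, z ^ (1 - q) := by
    have hc : IntervalIntegrable (fun _ : ℝ => (2 * u) ^ (1 - q)) volume u w :=
      intervalIntegrable_const
    have hmono : ∀ z ∈ Icc u w, (2 * u) ^ (1 - q) ≤ z ^ (1 - q) := by
      intro z hz
      exact Real.rpow_le_rpow_of_nonpos (lt_of_lt_of_le hu0 hz.1)
        (le_trans hz.2 hw2u) (by linarith)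
    have := intervalIntegral.integral_mono_on huw hc hi1 hmono
    simpa [smul_eq_mul] using this
  have hkey : 2 ^ (1 - q) * ((v - u) * (u + v)⁻¹ * u ^ (1 - q))
      ≤ (w - u) * ((2 * u) ^ (1 - q)) := by
    rw [Real.mul_rpow (by norm_num) hu0.le]
    have hfrac : (v - u) * (u + v)⁻¹ ≤ w - u := by
      have huv2 : (0:ℝ) < u + v := by linarith
      rcases le_or_gt v (2 * u) with h | h
      · have hwv' : w = v := min_eq_left h
        rw [hwv']
        have h1 : (u + v)⁻¹ ≤ 1 := by
          rw [inv_le_one_iff₀]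
          right; linarith
        nlinarith [sub_nonneg.2 huv]
      · have hwv' : w = 2 * u := min_eq_right h.le
        rw [hwv']
        have h1 : (v - u) * (u + v)⁻¹ ≤ 1 := by
          rw [mul_inv_le_iff₀ huv2]
          linarith
        linarith
    have hpos : (0:ℝ) ≤ 2 ^ (1 - q) * u ^ (1 - q) := by positivity
    calc 2 ^ (1 - q) * ((v - u) * (u + v)⁻¹ * u ^ (1 - q))
        = ((v - u) * (u + v)⁻¹) * (2 ^ (1 - q) * u ^ (1 - q)) := by ring
      _ ≤ (w - u) * (2 ^ (1 - q) * u ^ (1 - q)) := by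
          apply mul_le_mul_of_nonneg_right hfrac hpos
      _ = (w - u) * (2 ^ (1 - q) * u ^ (1 - q)) := rfl
  rw [hsplit]
  calc 2 ^ (1 - q) * ((v - u) * (u + v)⁻¹ * u ^ (1 - q))
      ≤ (w - u) * ((2 * u) ^ (1 - q)) := hkey
    _ ≤ ∫ z in u..w, z ^ (1 - q) := h2
    _ ≤ _ := by linarith

lemma keyPos {F φ : ℝ → E3 → ℝ} {q : ℝ} (hq : 1 < q)
    (hFc : ContinuousOn (fun p : ℝ × E3 => F p.1 p.2) (Set.Ici 0 ×ˢ Set.univ))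
    (hF0 : ∀ (t : ℝ) (x : E3), 0 ≤ t → 0 ≤ F t x)
    (hφ : ContDiff ℝ 2 (fun p : ℝ × E3 => φ p.1 p.2))
    (hrad : ∀ t, Radial (φ t))
    (hbox : ∀ (t : ℝ) (x : E3), 0 ≤ t → box φ t x = F t x)
    (hφ0 : ∀ x : E3, φ 0 x = 0) (hφt0 : ∀ x : E3, dtP φ 0 x = 0)
    {K a b : ℝ} (hK : 0 ≤ K) (ha : 0 < a) (hab : a ≤ b)
    (hSlab : ∀ t' r' : ℝ, 0 ≤ t' → 0 < r' → (t' - r') / 2 ∈ Set.Icc a b →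
      K * ((t' + r') / 2) ^ (-q) ≤ F t' (r' • e₀))
    (t : ℝ) (x : E3) (hr : 0 < ‖x‖)
    (hbu : 2 * b ≤ (t - ‖x‖) / 2) (h1u : 1 ≤ (t - ‖x‖) / 2) :
    2⁻¹ * 2 ^ (1 - q) * (b - a) * K * t⁻¹ * ((t - ‖x‖) / 2) ^ (1 - q) ≤ φ t x := by
  set r : ℝ := ‖x‖ with hrdef
  set u : ℝ := (t - r) / 2 with hudef
  set v : ℝ := (t + r) / 2 with hvdef
  have hu0 : (0:ℝ) < u := lt_of_lt_of_le one_pos h1u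
  have huv : u < v := by rw [hudef, hvdef]; linarith
  have htuv : t = u + v := by rw [hudef, hvdef]; ring
  have hruv : r = v - u := by rw [hudef, hvdef]; ring
  have hb0 : 0 < b := lt_of_lt_of_le ha hab
  have ht0 : 0 ≤ t := by rw [htuv]; linarith
  set g : ℝ × ℝ → ℝ := gP φ with hgdef
  have hg : ContDiff ℝ 2 g := gP_contDiff hφ
  have hgc : Continuous g := hg.continuous
  have hGc : Continuous (fun p : ℝ × ℝ => fderiv ℝ g p (1, 1)) := by
    have h1 : Continuous (fderiv ℝ g) := (hg.fderiv_right (m := 1) le_rfl).continuous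
    exact (ContinuousLinearMap.apply ℝ ℝ ((1:ℝ), (1:ℝ))).continuous.comp h1
  set k : ℝ → ℝ := fun v' => (v' - u) * fderiv ℝ g (u + v', v' - u) (1, 1)
    + g (u + v', v' - u) with hkdef
  have hc1 : Continuous (fun v' : ℝ => ((u + v', v' - u) : ℝ × ℝ)) :=
    (continuous_const.add continuous_id).prodMk (continuous_id.sub continuous_const)
  have hkcont : Continuous k :=
    ((continuous_id.sub continuous_const).mul (hGc.comp hc1)).add (hgc.comp hc1)
  -- Step A : pointwise lower bound for k on Ioc u v
  have hkb : ∀ v' ∈ Ioc u v, (b - a) * (K * v' ^ (-q) * (v' / 2)) ≤ k v' := by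
    intro v' hv'
    have huv' : u < v' := hv'.1
    have hv'0 : (0:ℝ) < v' := lt_trans hu0 huv'
    set m : ℝ → ℝ := fun w => (v' - w) * fderiv ℝ g (w + v', v' - w) (1, 1)
      + g (w + v', v' - w) with hmdef
    have hkm : k v' = m u := rfl
    set mder : ℝ → ℝ := fun z => (v' - z) * F (z + v') ((v' - z) • e₀) with hmderdef
    have hnvu : -v' ≤ u := by linarith
    have hc2 : Continuous (fun z : ℝ => ((z + v', v' - z) : ℝ × ℝ)) :=
      (continuous_id.add continuous_const).prodMk (continuous_const.sub continuous_id)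
    have hcontm : ContinuousOn m (Icc (-v') u) :=
      (((continuous_const.sub continuous_id).mul (hGc.comp hc2)).add
        (hgc.comp hc2)).continuousOn
    have hmderC : ContinuousOn mder (Icc (-v') u) := by
      apply ContinuousOn.mul
      · exact (continuous_const.sub continuous_id).continuousOn
      · have hζ : Continuous (fun z : ℝ => ((z + v', (v' - z) • e₀) : ℝ × E3)) :=
          (continuous_id.add continuous_const).prodMk
            ((continuous_const.sub continuous_id).smul continuous_const)
        have hmaps : MapsTo (fun z : ℝ => ((z + v', (v' - z) • e₀) : ℝ × E3))
            (Icc (-v') u) (Set.Ici 0 ×ˢ Set.univ) := by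
          intro z hz
          constructor
          · simp only [mem_Ici]; linarith [hz.1]
          · trivial
        exact hFc.comp hζ.continuousOn hmaps
    have hint : IntervalIntegrable mder volume (-v') u :=
      hmderC.intervalIntegrable_of_Icc hnvu
    have hderiv : ∀ z ∈ Ioo (-v') u, HasDerivWithinAt m (mder z) (Ioi z) z := by
      intro z hz
      have ht' : (0:ℝ) ≤ z + v' := by linarith [hz.1]
      have hr' : (0:ℝ) < v' - z := by linarith [hz.2]
      have hH := mHasDeriv hg v' z
      have hw := wave_identity hφ hrad hbox (z + v') (v' - z) ht' hr'
      have hval : (v' - z) * (fderiv ℝ (fderiv ℝ g) (z + v', v' - z) (1, 0) (1, 0)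
            - fderiv ℝ (fderiv ℝ g) (z + v', v' - z) (0, 1) (0, 1))
          - 2 * fderiv ℝ g (z + v', v' - z) (0, 1) = mder z := by
        have hne : v' - z ≠ 0 := ne_of_gt hr'
        field_simp at hw
        rw [hmderdef]
        linear_combination hw
      rw [hval] at hH
      exact hH.hasDerivWithinAt
    have hftc := intervalIntegral.integral_eq_sub_of_hasDeriv_right_of_le hnvu
      hcontm hderiv hint
    have hpt1 : (-v' + v' : ℝ) = 0 := by ring
    have hpt2 : (v' - -v' : ℝ) = 2 * v' := by ring
    have hg0 : ∀ ρ : ℝ, g (0, ρ) = 0 := fun ρ => hφ0 _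
    have hgt0 : fderiv ℝ g (0, 2 * v') (1, 0) = 0 := by
      have h := dtP_eq hφ hrad 0 ((2 * v') • e₀)
      rw [norm_smul_e₀ _ (by linarith : (0:ℝ) ≤ 2 * v')] at h
      rw [← h]
      exact hφt0 _
    have hgr0 : fderiv ℝ g (0, 2 * v') (0, 1) = 0 := by
      have hline := lineDeriv1 (hg.differentiable two_ne_zero) (0, 0) (0, 1) (2 * v')
      have hpt : ((0:ℝ), (0:ℝ)) + (2 * v') • ((0:ℝ), (1:ℝ)) = ((0:ℝ), 2 * v') := by
        norm_num
      rw [hpt] at hline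
      have hfn : (fun τ : ℝ => g (((0:ℝ), (0:ℝ)) + τ • ((0:ℝ), (1:ℝ)))) = fun _ => (0:ℝ) := by
        funext τ
        have h2 : ((0:ℝ), (0:ℝ)) + τ • ((0:ℝ), (1:ℝ)) = ((0:ℝ), τ) := by norm_num
        rw [h2, hg0]
      rw [hfn] at hline
      exact hline.unique (hasDerivAt_const _ _)
    have hsplit : fderiv ℝ g (0, 2 * v') ((1:ℝ), (1:ℝ))
        = fderiv ℝ g (0, 2 * v') (1, 0) + fderiv ℝ g (0, 2 * v') (0, 1) := by
      rw [← map_add]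
      congr 1
      norm_num
    have hm0 : m (-v') = 0 := by
      have hrfl : m (-v') = (v' - -v') * fderiv ℝ g (-v' + v', v' - -v') (1, 1)
          + g (-v' + v', v' - -v') := rfl
      rw [hrfl, hpt1, hpt2, hsplit, hgt0, hgr0, hg0]
      ring
    have hmu : m u = ∫ z in (-v')..u, mder z := by
      rw [hftc, hm0]; ring
    rw [hkm, hmu]
    have hMle : ∀ z ∈ Icc a b, K * v' ^ (-q) * (v' / 2) ≤ mder z := by
      intro z hz
      have ht'' : (0:ℝ) ≤ z + v' := by linarith [ha, hz.1, hv'0.le]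
      have hzb : z ≤ b := hz.2
      have hr'' : (0:ℝ) < v' - z := by linarith [hb0, hbu, huv']
      have hslabmem : ((z + v') - (v' - z)) / 2 ∈ Icc a b := by
        have h3 : ((z + v') - (v' - z)) / 2 = z := by ring
        rw [h3]; exact hz
      have hF := hSlab (z + v') (v' - z) ht'' hr'' hslabmem
      have hvv : ((z + v') + (v' - z)) / 2 = v' := by ring
      rw [hvv] at hF
      have hFnn : (0:ℝ) ≤ K * v' ^ (-q) := by positivity
      have h1 : v' / 2 ≤ v' - b := by linarith [hbu, huv']
      calc K * v' ^ (-q) * (v' / 2) ≤ K * v' ^ (-q) * (v' - z) := by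
            apply mul_le_mul_of_nonneg_left (by linarith [hz.1, hz.2]) hFnn
        _ ≤ (v' - z) * F (z + v') ((v' - z) • e₀) := by
            rw [mul_comm]
            exact mul_le_mul_of_nonneg_left hF (le_of_lt hr'')
        _ = mder z := rfl
    have hnn : ∀ z ∈ Icc (-v') u, 0 ≤ mder z := by
      intro z hz
      apply mul_nonneg (by linarith [hz.2]) (hF0 _ _ (by linarith [hz.1]))
    have hM0 : (0:ℝ) ≤ K * v' ^ (-q) * (v' / 2) := by positivity
    exact integral_lb (by linarith [ha, hv'0]) hab (by linarith [hbu, hb0]) hmderC hnn hMle hM0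
  -- Step B : outer FTC
  set h₁ : ℝ → ℝ := fun w => (w - u) * g (u + w, w - u) with hh₁def
  have hftcO : ∫ v' in u..v, k v' = h₁ v - h₁ u := by
    apply intervalIntegral.integral_eq_sub_of_hasDerivAt
    · intro z _
      exact kHasDeriv hg u z
    · exact hkcont.intervalIntegrable u v
  have hh₁u : h₁ u = 0 := by
    have hrfl : h₁ u = (u - u) * g (u + u, u - u) := rfl
    rw [hrfl]; ring
  have hh₁v : h₁ v = r * φ t x := by
    have hrfl : h₁ v = (v - u) * g (u + v, v - u) := rfl
    have h1 : u + v = t := htuv.symm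
    have h2 : v - u = r := hruv.symm
    rw [hrfl, h1, h2, radial_eq_gP hrad t x]
  -- Step C : combine
  set Cst : ℝ := (b - a) * K / 2 with hCst
  have hba : (0:ℝ) ≤ b - a := by linarith
  have hCst0 : 0 ≤ Cst := by rw [hCst]; positivity
  have hlow : ∀ v' ∈ Ioc u v, Cst * v' ^ (1 - q) ≤ k v' := by
    intro v' hv'
    have hv'0 : (0:ℝ) < v' := lt_trans hu0 hv'.1
    have hrw : v' ^ (1 - q) = v' * v' ^ (-q) := by
      have h1 : (1:ℝ) - q = 1 + -q := by ring
      rw [h1, Real.rpow_add hv'0, Real.rpow_one]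
    have hthis := hkb v' hv'
    rw [hrw, hCst]
    calc (b - a) * K / 2 * (v' * v' ^ (-q)) = (b - a) * (K * v' ^ (-q) * (v' / 2)) := by ring
      _ ≤ k v' := hthis
  have hlbint : IntervalIntegrable (fun z : ℝ => Cst * z ^ (1 - q)) volume u v :=
    (continuousOn_const.mul (rpow_contOn (α := u) (β := v) (1 - q) hu0)).intervalIntegrable_of_Icc
      huv.le
  have hae : (fun z : ℝ => Cst * z ^ (1 - q)) ≤ᵐ[volume.restrict (Icc u v)] k := by
    have hne : ∀ᵐ z ∂(volume : Measure ℝ), z ≠ u := by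
      rw [ae_iff]
      have hset : {z : ℝ | ¬ z ≠ u} = {u} := by ext z; simp
      rw [hset]
      exact measure_singleton u
    filter_upwards [ae_restrict_of_ae hne, ae_restrict_mem measurableSet_Icc] with z hz1 hz2
    exact hlow z ⟨lt_of_le_of_ne hz2.1 (Ne.symm hz1), hz2.2⟩
  have hIleq : Cst * ∫ z in u..v, z ^ (1 - q) ≤ ∫ v' in u..v, k v' := by
    rw [← intervalIntegral.integral_const_mul]
    exact intervalIntegral.integral_mono_ae_restrict huv.le hlbint
      (hkcont.intervalIntegrable u v) hae
  have hfinal : Cst * (2 ^ (1 - q) * ((v - u) * (u + v)⁻¹ * u ^ (1 - q))) ≤ r * φ t x := by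
    calc Cst * (2 ^ (1 - q) * ((v - u) * (u + v)⁻¹ * u ^ (1 - q)))
        ≤ Cst * ∫ z in u..v, z ^ (1 - q) :=
          mul_le_mul_of_nonneg_left (calc1 hq h1u huv.le) hCst0
      _ ≤ ∫ v' in u..v, k v' := hIleq
      _ = h₁ v - h₁ u := hftcO
      _ = r * φ t x := by rw [hh₁v, hh₁u]; ring
  have heqq : Cst * (2 ^ (1 - q) * ((v - u) * (u + v)⁻¹ * u ^ (1 - q)))
      = r * (2⁻¹ * 2 ^ (1 - q) * (b - a) * K * t⁻¹ * u ^ (1 - q)) := by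
    rw [← hruv, ← htuv, hCst]
    ring
  rw [heqq] at hfinal
  exact le_of_mul_le_mul_left hfinal hr

lemma rpow_slab_lb {U z s : ℝ} (hU : 0 < U) (hz : z ∈ Icc (U / 4) (U / 2)) :
    (4:ℝ) ^ (-|s|) * U ^ (-s) ≤ z ^ (-s) := by
  have hz0 : 0 < z := lt_of_lt_of_le (by positivity) hz.1
  have hw1 : (1/4 : ℝ) ≤ z / U := by
    rw [le_div_iff₀ hU]
    linarith [hz.1]
  have hw2 : z / U ≤ 1/2 := by
    rw [div_le_iff₀ hU]
    linarith [hz.2]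
  have hwpos : (0:ℝ) < z / U := by positivity
  have key : (4:ℝ) ^ (-|s|) ≤ (z / U) ^ (-s) := by
    rcases le_or_gt s 0 with hs | hs
    · have habs : |s| = -s := abs_of_nonpos hs
      rw [habs, neg_neg]
      have h4 : (4:ℝ) ^ s = (1/4 : ℝ) ^ (-s) := by
        rw [one_div, Real.inv_rpow (by norm_num), ← Real.rpow_neg (by norm_num), neg_neg]
      rw [h4]
      exact Real.rpow_le_rpow (by norm_num) hw1 (by linarith)
    · have h1 : (1:ℝ) ≤ (z / U) ^ (-s) := by
        have := Real.rpow_le_rpow_of_nonpos hwpos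
          (hw2.trans (by norm_num : (1/2:ℝ) ≤ 1)) (by linarith : -s ≤ 0)
        simpa using this
      have h2 : (4:ℝ) ^ (-|s|) ≤ 1 :=
        Real.rpow_le_one_of_one_le_of_nonpos (by norm_num) (neg_nonpos.2 (abs_nonneg s))
      linarith
  calc (4:ℝ) ^ (-|s|) * U ^ (-s) ≤ (z / U) ^ (-s) * U ^ (-s) :=
        mul_le_mul_of_nonneg_right key (Real.rpow_nonneg hU.le _)
    _ = z ^ (-s) := by
        rw [Real.div_rpow hz0.le hU.le, div_mul_cancel₀]
        exact ne_of_gt (Real.rpow_pos_of_pos hU _)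

lemma extend0 {φ : ℝ → E3 → ℝ} (hφ : ContDiff ℝ 2 (fun p : ℝ × E3 => φ p.1 p.2))
    {C u₁ θ : ℝ} (hu₁ : 0 < u₁)
    (H : ∀ (t : ℝ) (x : E3), 0 ≤ t → 0 < ‖x‖ → u₁ < (t - ‖x‖) / 2 →
      C * t⁻¹ * ((t - ‖x‖) / 2) ^ θ ≤ φ t x)
    (t : ℝ) (x : E3) (ht : 0 ≤ t) (hx : ‖x‖ = 0) (hu : u₁ < (t - ‖x‖) / 2) :
    C * t⁻¹ * ((t - ‖x‖) / 2) ^ θ ≤ φ t x := by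
  have hx0 : x = 0 := norm_eq_zero.1 hx
  rw [hx, hx0]
  rw [hx] at hu
  have ht2 : 2 * u₁ < t := by linarith [hu]
  have htpos : 0 < t := lt_trans (by linarith) ht2
  have hδset : Ioo (0:ℝ) (t - 2 * u₁) ∈ 𝓝[>] (0:ℝ) :=
    Ioo_mem_nhdsGT_of_mem ⟨le_refl _, by linarith⟩
  have hφcont : Continuous (fun δ : ℝ => φ t (δ • e₀)) := by
    have h1 : Continuous (fun y : E3 => φ t y) := by
      have := hφ.continuous
      exact this.comp (continuous_const.prodMk continuous_id)
    exact h1.comp (continuous_id.smul continuous_const)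
  have hψ : Tendsto (fun δ : ℝ => φ t (δ • e₀)) (𝓝[>] (0:ℝ)) (𝓝 (φ t 0)) := by
    have h : Tendsto (fun δ : ℝ => φ t (δ • e₀)) (𝓝 (0:ℝ)) (𝓝 (φ t ((0:ℝ) • e₀))) :=
      hφcont.continuousAt (x := (0:ℝ))
    have h2 : φ t ((0:ℝ) • e₀) = φ t 0 := by rw [zero_smul]
    rw [h2] at h
    exact h.mono_left nhdsWithin_le_nhds
  have hρ : Tendsto (fun δ : ℝ => C * t⁻¹ * ((t - δ) / 2) ^ θ) (𝓝[>] (0:ℝ))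
      (𝓝 (C * t⁻¹ * ((t - 0) / 2) ^ θ)) := by
    apply Tendsto.mono_left _ nhdsWithin_le_nhds
    have hbase : ContinuousAt (fun δ : ℝ => (t - δ) / 2) 0 := by fun_prop
    have hca : ContinuousAt (fun δ : ℝ => C * t⁻¹ * ((t - δ) / 2) ^ θ) 0 :=
      continuousAt_const.mul (hbase.rpow_const
        (Or.inl (ne_of_gt (by linarith : (0:ℝ) < (t - 0) / 2))))
    exact hca.tendsto
  have hev : (fun δ : ℝ => C * t⁻¹ * ((t - δ) / 2) ^ θ)
      ≤ᶠ[𝓝[>] (0:ℝ)] fun δ : ℝ => φ t (δ • e₀) := by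
    filter_upwards [hδset] with δ hδ
    have hδ0 : 0 < δ := hδ.1
    have hnorm : ‖(δ • e₀ : E3)‖ = δ := norm_smul_e₀ δ hδ0.le
    have := H t (δ • e₀) ht (by rw [hnorm]; exact hδ0) (by rw [hnorm]; linarith [hδ.2])
    rwa [hnorm] at this
  exact le_of_tendsto_of_tendsto hρ hψ hev

end Wave

/-- Lower bounds for solutions of `□φ = F` on `[0,∞) × ℝ³` with trivial data and a
nonnegative, continuous, spherically symmetric source `F` bounded below near null infinity:
(i) if `F ≥ c v^{-q}` on a slab `u ∈ [u₀, u₀+ε]` then `φ ≳ t⁻¹ u^{1-q}` for large `u`;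
(ii) if `F ≥ c v^{-q} u^{-s}` for `u > u₀` then `φ ≳ t⁻¹ u^{1-q+max(1-s,0)}` for large `u`.
Here `u = (t-|x|)/2`, `v = (t+|x|)/2`, and the constants depend only on the parameters. -/
theorem stmt_7 (q c ε u₀ : ℝ) (hq : 1 < q) (hc : 0 < c) (hε : 0 < ε) (hu₀ : 0 < u₀) :
    ((∃ u₁ C : ℝ, 0 < C ∧ ∀ F φ : ℝ → E3 → ℝ,
        ContinuousOn (fun p : ℝ × E3 => F p.1 p.2) (Set.Ici 0 ×ˢ Set.univ) →
        (∀ (t : ℝ) (x : E3), 0 ≤ t → 0 ≤ F t x) →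
        (∀ t, Radial (F t)) →
        ContDiff ℝ 2 (fun p : ℝ × E3 => φ p.1 p.2) →
        (∀ t, Radial (φ t)) →
        (∀ (t : ℝ) (x : E3), 0 ≤ t → box φ t x = F t x) →
        (∀ x : E3, φ 0 x = 0) → (∀ x : E3, dtP φ 0 x = 0) →
        (∀ (t : ℝ) (x : E3), 0 ≤ t → (t - ‖x‖) / 2 ∈ Set.Icc u₀ (u₀ + ε) →
          c * ((t + ‖x‖) / 2) ^ (-q) ≤ F t x) →
        ∀ (t : ℝ) (x : E3), 0 ≤ t → u₁ < (t - ‖x‖) / 2 →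
          C * t⁻¹ * ((t - ‖x‖) / 2) ^ (1 - q) ≤ φ t x)) ∧
    (∀ s : ℝ, s ≠ 1 → ∃ u₁ C : ℝ, 0 < C ∧ ∀ F φ : ℝ → E3 → ℝ,
        ContinuousOn (fun p : ℝ × E3 => F p.1 p.2) (Set.Ici 0 ×ˢ Set.univ) →
        (∀ (t : ℝ) (x : E3), 0 ≤ t → 0 ≤ F t x) →
        (∀ t, Radial (F t)) →
        ContDiff ℝ 2 (fun p : ℝ × E3 => φ p.1 p.2) →
        (∀ t, Radial (φ t)) →
        (∀ (t : ℝ) (x : E3), 0 ≤ t → box φ t x = F t x) →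
        (∀ x : E3, φ 0 x = 0) → (∀ x : E3, dtP φ 0 x = 0) →
        (∀ (t : ℝ) (x : E3), 0 ≤ t → u₀ < (t - ‖x‖) / 2 →
          c * ((t + ‖x‖) / 2) ^ (-q) * ((t - ‖x‖) / 2) ^ (-s) ≤ F t x) →
        ∀ (t : ℝ) (x : E3), 0 ≤ t → u₁ < (t - ‖x‖) / 2 →
          C * t⁻¹ * ((t - ‖x‖) / 2) ^ (1 - q + max (1 - s) 0) ≤ φ t x) := by
  constructor
  · -- Part (i)
    refine ⟨max (2 * (u₀ + ε)) 1, 2⁻¹ * 2 ^ (1 - q) * ε * c, by positivity, ?_⟩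
    intro F φ hFc hF0 _hFrad hφ hrad hbox hφ0 hφt0 hFlb
    have hu₁ : (0:ℝ) < max (2 * (u₀ + ε)) 1 := lt_of_lt_of_le one_pos (le_max_right _ _)
    have Hpos : ∀ (t : ℝ) (x : E3), 0 ≤ t → 0 < ‖x‖ → max (2 * (u₀ + ε)) 1 < (t - ‖x‖) / 2 →
        2⁻¹ * 2 ^ (1 - q) * ε * c * t⁻¹ * ((t - ‖x‖) / 2) ^ (1 - q) ≤ φ t x := by
      intro t x ht hx hu
      have h2b : 2 * (u₀ + ε) ≤ (t - ‖x‖) / 2 := le_trans (le_max_left _ _) hu.le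
      have h1u : 1 ≤ (t - ‖x‖) / 2 := le_trans (le_max_right _ _) hu.le
      have hSlab : ∀ t' r' : ℝ, 0 ≤ t' → 0 < r' → (t' - r') / 2 ∈ Set.Icc u₀ (u₀ + ε) →
          c * ((t' + r') / 2) ^ (-q) ≤ F t' (r' • e₀) := by
        intro t' r' ht' hr' hmem
        have := hFlb t' (r' • e₀) ht' (by rwa [norm_smul_e₀ _ hr'.le])
        rwa [norm_smul_e₀ _ hr'.le] at this
      have hkp := keyPos hq hFc hF0 hφ hrad hbox hφ0 hφt0 hc.le hu₀
        (by linarith : u₀ ≤ u₀ + ε) hSlab t x hx (by linarith [h2b]) h1u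
      have heq : 2⁻¹ * 2 ^ (1 - q) * ε * c * t⁻¹ * ((t - ‖x‖) / 2) ^ (1 - q)
          = 2⁻¹ * 2 ^ (1 - q) * (u₀ + ε - u₀) * c * t⁻¹ * ((t - ‖x‖) / 2) ^ (1 - q) := by
        ring
      rw [heq]
      exact hkp
    intro t x ht hu
    rcases eq_or_lt_of_le (norm_nonneg x) with h0 | h0
    · exact extend0 hφ hu₁ Hpos t x ht h0.symm hu
    · exact Hpos t x ht h0 hu
  · -- Part (ii)
    intro s hs
    rcases lt_or_gt_of_ne hs with hsl | hsg
    · -- s < 1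
      refine ⟨max (4 * u₀) 1, 2⁻¹ * 2 ^ (1 - q) * 4⁻¹ * (c * 4 ^ (-|s|)), by positivity, ?_⟩
      intro F φ hFc hF0 _hFrad hφ hrad hbox hφ0 hφt0 hFlb
      have hu₁ : (0:ℝ) < max (4 * u₀) 1 := lt_of_lt_of_le one_pos (le_max_right _ _)
      have hmax : max (1 - s) 0 = 1 - s := max_eq_left (by linarith)
      have Hpos : ∀ (t : ℝ) (x : E3), 0 ≤ t → 0 < ‖x‖ → max (4 * u₀) 1 < (t - ‖x‖) / 2 →
          2⁻¹ * 2 ^ (1 - q) * 4⁻¹ * (c * 4 ^ (-|s|)) * t⁻¹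
            * ((t - ‖x‖) / 2) ^ (1 - q + max (1 - s) 0) ≤ φ t x := by
        intro t x ht hx hu
        set u : ℝ := (t - ‖x‖) / 2 with hudef
        have hu4 : 4 * u₀ < u := lt_of_le_of_lt (le_max_left _ _) hu
        have h1u : 1 ≤ u := le_trans (le_max_right _ _) hu.le
        have hu0 : (0:ℝ) < u := lt_of_lt_of_le one_pos h1u
        have hSlab : ∀ t' r' : ℝ, 0 ≤ t' → 0 < r' → (t' - r') / 2 ∈ Set.Icc (u / 4) (u / 2) →
            c * (4 ^ (-|s|) * u ^ (-s)) * ((t' + r') / 2) ^ (-q) ≤ F t' (r' • e₀) := by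
          intro t' r' ht' hr' hmem
          have hz0 : u₀ < (t' - r') / 2 := by
            have := hmem.1
            linarith [hu4]
          have hF := hFlb t' (r' • e₀) ht' (by rwa [norm_smul_e₀ _ hr'.le])
          rw [norm_smul_e₀ _ hr'.le] at hF
          have hlb := rpow_slab_lb (s := s) hu0 hmem
          have hvnn : (0:ℝ) ≤ ((t' + r') / 2) ^ (-q) := by
            apply Real.rpow_nonneg
            linarith [ht', hr'.le]
          calc c * (4 ^ (-|s|) * u ^ (-s)) * ((t' + r') / 2) ^ (-q)
              ≤ c * ((t' - r') / 2) ^ (-s) * ((t' + r') / 2) ^ (-q) := by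
                apply mul_le_mul_of_nonneg_right _ hvnn
                exact mul_le_mul_of_nonneg_left hlb hc.le
            _ = c * ((t' + r') / 2) ^ (-q) * ((t' - r') / 2) ^ (-s) := by ring
            _ ≤ F t' (r' • e₀) := hF
        have hkp := keyPos hq hFc hF0 hφ hrad hbox hφ0 hφt0
          (by positivity : (0:ℝ) ≤ c * (4 ^ (-|s|) * u ^ (-s))) (by positivity : (0:ℝ) < u / 4)
          (by linarith : u / 4 ≤ u / 2) hSlab t x hx (by rw [← hudef]; linarith) (by rw [← hudef]; exact h1u)
        rw [← hudef] at hkp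
        have hexp : u ^ (1 - q + max (1 - s) 0) = u ^ (1 - q) * (u * u ^ (-s)) := by
          rw [hmax]
          have h1 : (1 - q) + (1 - s) = ((1 - q) + 1) + (-s) := by ring
          rw [h1, Real.rpow_add hu0, Real.rpow_add hu0, Real.rpow_one]
          ring
        have heq : 2⁻¹ * 2 ^ (1 - q) * 4⁻¹ * (c * 4 ^ (-|s|)) * t⁻¹
              * u ^ (1 - q + max (1 - s) 0)
            = 2⁻¹ * 2 ^ (1 - q) * (u / 2 - u / 4) * (c * (4 ^ (-|s|) * u ^ (-s))) * t⁻¹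
              * u ^ (1 - q) := by
          rw [hexp]
          ring
        rw [heq]
        exact hkp
      intro t x ht hu
      rcases eq_or_lt_of_le (norm_nonneg x) with h0 | h0
      · exact extend0 hφ hu₁ Hpos t x ht h0.symm hu
      · exact Hpos t x ht h0 hu
    · -- s > 1
      refine ⟨max (8 * u₀) 1,
        2⁻¹ * 2 ^ (1 - q) * (2 * u₀) * (c * (4 ^ (-|s|) * (8 * u₀) ^ (-s))), by positivity, ?_⟩
      intro F φ hFc hF0 _hFrad hφ hrad hbox hφ0 hφt0 hFlb
      have hu₁ : (0:ℝ) < max (8 * u₀) 1 := lt_of_lt_of_le one_pos (le_max_right _ _)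
      have hmax : max (1 - s) 0 = 0 := max_eq_right (by linarith)
      have Hpos : ∀ (t : ℝ) (x : E3), 0 ≤ t → 0 < ‖x‖ → max (8 * u₀) 1 < (t - ‖x‖) / 2 →
          2⁻¹ * 2 ^ (1 - q) * (2 * u₀) * (c * (4 ^ (-|s|) * (8 * u₀) ^ (-s))) * t⁻¹
            * ((t - ‖x‖) / 2) ^ (1 - q + max (1 - s) 0) ≤ φ t x := by
        intro t x ht hx hu
        have hu8 : 8 * u₀ < (t - ‖x‖) / 2 := lt_of_le_of_lt (le_max_left _ _) hu
        have h1u : 1 ≤ (t - ‖x‖) / 2 := le_trans (le_max_right _ _) hu.le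
        have hSlab : ∀ t' r' : ℝ, 0 ≤ t' → 0 < r' →
            (t' - r') / 2 ∈ Set.Icc (2 * u₀) (4 * u₀) →
            c * (4 ^ (-|s|) * (8 * u₀) ^ (-s)) * ((t' + r') / 2) ^ (-q)
              ≤ F t' (r' • e₀) := by
          intro t' r' ht' hr' hmem
          have hz0 : u₀ < (t' - r') / 2 := by
            have := hmem.1
            linarith
          have hF := hFlb t' (r' • e₀) ht' (by rwa [norm_smul_e₀ _ hr'.le])
          rw [norm_smul_e₀ _ hr'.le] at hF
          have hmem' : (t' - r') / 2 ∈ Set.Icc ((8 * u₀) / 4) ((8 * u₀) / 2) := by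
            constructor
            · linarith [hmem.1]
            · linarith [hmem.2]
          have hlb := rpow_slab_lb (s := s) (by linarith : (0:ℝ) < 8 * u₀) hmem'
          have hvnn : (0:ℝ) ≤ ((t' + r') / 2) ^ (-q) := by
            apply Real.rpow_nonneg
            linarith [ht', hr'.le]
          calc c * (4 ^ (-|s|) * (8 * u₀) ^ (-s)) * ((t' + r') / 2) ^ (-q)
              ≤ c * ((t' - r') / 2) ^ (-s) * ((t' + r') / 2) ^ (-q) := by
                apply mul_le_mul_of_nonneg_right _ hvnn
                exact mul_le_mul_of_nonneg_left hlb hc.le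
            _ = c * ((t' + r') / 2) ^ (-q) * ((t' - r') / 2) ^ (-s) := by ring
            _ ≤ F t' (r' • e₀) := hF
        have hkp := keyPos hq hFc hF0 hφ hrad hbox hφ0 hφt0
          (by positivity : (0:ℝ) ≤ c * (4 ^ (-|s|) * (8 * u₀) ^ (-s)))
          (by linarith : (0:ℝ) < 2 * u₀) (by linarith : 2 * u₀ ≤ 4 * u₀) hSlab t x hx
          (by linarith) h1u
        have heq : 2⁻¹ * 2 ^ (1 - q) * (2 * u₀) * (c * (4 ^ (-|s|) * (8 * u₀) ^ (-s))) * t⁻¹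
              * ((t - ‖x‖) / 2) ^ (1 - q + max (1 - s) 0)
            = 2⁻¹ * 2 ^ (1 - q) * (4 * u₀ - 2 * u₀) * (c * (4 ^ (-|s|) * (8 * u₀) ^ (-s))) * t⁻¹
              * ((t - ‖x‖) / 2) ^ (1 - q) := by
          rw [hmax, add_zero]
          ring
        rw [heq]
        exact hkp
      intro t x ht hu
      rcases eq_or_lt_of_le (norm_nonneg x) with h0 | h0
      · exact extend0 hφ hu₁ Hpos t x ht h0.symm hu
      · exact Hpos t x ht h0 hu

end
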